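/- For any strict partition λ with ℓ(λ) = n and any integer p with 1 ≤ p ≤ n, the localization coefficient satisfies 𝔡_{λ,(p)}^{λ} = C(n,p) · 2^{p-1}, where 𝔡_{λ,(p)}^{λ} = |E_{ρ_n}((p))| · 2^{p-1}; equivalently, the number of excited Young diagrams of the single-row partition (p) inside the shifted staircase ρ_n is C(n,p). -/

import Mathlib

/-- A strict partition: a strictly decreasing list of positive integers. -/
def IsStrictPartition (l : List ℕ) : Prop :=
  l.Pairwise (· > ·) ∧ ∀ x ∈ l, 0 < x

/-- The shifted staircase `ρ_n = (n, n-1, …, 2, 1)` as a list. -/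
def staircase (n : ℕ) : List ℕ := (List.range n).map (fun i => n - i)

/-- The truncated staircase `ρ_{n,m} = (n, n-1, …, n-m+1)` as a list. -/
def truncStaircase (n m : ℕ) : List ℕ := (List.range m).map (fun i => n - i)

/-- Containment of partitions: `λ ⊆ μ` iff `λ_i ≤ μ_i` for all `i` (padding by zeros). -/
def Contains (lam mu : List ℕ) : Prop := ∀ i, lam.getD i 0 ≤ mu.getD i 0

/-- Cell membership for the shifted Young diagram of `l`
(0-indexed matrix coordinates; row `i` occupies columns `i, …, i + l_i - 1`). -/
def InShape (l : List ℕ) (p : ℕ × ℕ) : Prop :=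
  p.1 ≤ p.2 ∧ p.2 < p.1 + l.getD p.1 0

instance (l : List ℕ) (p : ℕ × ℕ) : Decidable (InShape l p) := by
  unfold InShape; infer_instance

/-- The set of cells of the shifted diagram of `l`. -/
def cells (l : List ℕ) : Set (ℕ × ℕ) := {p | InShape l p}

/-- One excited move on a configuration of `+`'s inside the shifted shape `ν`:
a `+` at `(i,j)` moves to `(i+1,j+1)` provided `(i,j+1)` and `(i+1,j+1)` are
boxes of `ν` unoccupied by `+`'s, and `(i+1,j)` is either not a box of `ν`
or unoccupied. -/
def ExcitedMove (nu : List ℕ) (D D' : Set (ℕ × ℕ)) : Prop :=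
  ∃ i j, (i, j) ∈ D ∧
    InShape nu (i, j + 1) ∧ (i, j + 1) ∉ D ∧
    InShape nu (i + 1, j + 1) ∧ (i + 1, j + 1) ∉ D ∧
    (¬ InShape nu (i + 1, j) ∨ (i + 1, j) ∉ D) ∧
    D' = insert (i + 1, j + 1) (D \ {(i, j)})

/-- The set `E_ν(μ)` of excited Young diagrams of `μ` in `ν`: configurations
reachable from the initial diagram (the cells of `μ`) by excited moves.
By convention it is empty when `μ ⊄ ν`. -/
def EYD (nu mu : List ℕ) : Set (Set (ℕ × ℕ)) :=
  {D | cells mu ⊆ cells nu ∧ Relation.ReflTransGen (ExcitedMove nu) (cells mu) D}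

-- auxiliary
def dvalid (n : ℕ) {p : ℕ} (d : Fin p → ℕ) : Prop :=
  Monotone d ∧ ∀ k : Fin p, d k + k.val < n

def config {p : ℕ} (d : Fin p → ℕ) : Set (ℕ × ℕ) :=
  Set.range (fun k : Fin p => (d k, d k + k.val))

lemma mem_config {p : ℕ} (d : Fin p → ℕ) (i j : ℕ) :
    (i, j) ∈ config d ↔ ∃ k : Fin p, d k = i ∧ i + k.val = j := by
  constructor
  · rintro ⟨k, hk⟩
    refine ⟨k, ?_, ?_⟩ <;> · simp only [Prod.mk.injEq] at hk; omega
  · rintro ⟨k, h1, h2⟩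
    exact ⟨k, by simp [Prod.ext_iff]; omega⟩

lemma staircase_getD (n i : ℕ) : (staircase n).getD i 0 = n - i := by
  unfold staircase
  rcases lt_or_ge i n with h | h
  · rw [List.getD_eq_getElem _ _ (by simpa using h)]
    simp
  · rw [List.getD_eq_default _ _ (by simpa using h)]
    omega

lemma inShape_staircase (n i j : ℕ) :
    InShape (staircase n) (i, j) ↔ i ≤ j ∧ j < n := by
  unfold InShape
  rw [staircase_getD]
  simp only
  omega

lemma cells_single (p : ℕ) : cells [p] = config (fun _ : Fin p => 0) := by
  ext ⟨i, j⟩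
  simp only [cells, InShape, Set.mem_setOf_eq]
  rw [mem_config]
  constructor
  · rintro ⟨h1, h2⟩
    match i with
    | 0 =>
      refine ⟨⟨j, by simpa using h2⟩, rfl, by simp⟩
    | (i+1) =>
      exfalso
      simp [List.getD] at h2
      omega
  · rintro ⟨k, rfl, rfl⟩
    simpa using k.2

lemma config_injective {p : ℕ} : Function.Injective (config (p := p)) := by
  intro d d' h
  funext k
  have h1 : (d k, d k + k.val) ∈ config d' := h ▸ ⟨k, rfl⟩
  rw [mem_config] at h1
  obtain ⟨m, hm1, hm2⟩ := h1
  have hmk : m = k := by ext; omega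
  rw [hmk] at hm1
  omega

lemma move_config {n p : ℕ} {d : Fin p → ℕ} (hd : dvalid n d) {D' : Set (ℕ × ℕ)}
    (h : ExcitedMove (staircase n) (config d) D') :
    ∃ d' : Fin p → ℕ, dvalid n d' ∧ D' = config d' := by
  obtain ⟨i, j, hij, hr, hrn, hdg, hdgn, _, hD'⟩ := h
  rw [mem_config] at hij
  obtain ⟨k, hk1, hk2⟩ := hij
  have hkey : ∀ b : Fin p, k < b → d k + 1 ≤ d b := by
    intro b hb
    have hb1 : k.val + 1 ≤ b.val := hb
    set k' : Fin p := ⟨k.val + 1, lt_of_le_of_lt hb1 b.2⟩ with hk'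
    have h1 : d k ≤ d k' := hd.1 (by simp [Fin.le_def, hk'])
    have h2 : d k ≠ d k' := by
      intro he
      exact hrn ((mem_config d i (j+1)).2 ⟨k', by omega, by simp [hk']; omega⟩)
    have h3 : d k' ≤ d b := hd.1 (by simp [Fin.le_def, hk']; omega)
    omega
  refine ⟨fun m => if m = k then d k + 1 else d m, ⟨?_, ?_⟩, ?_⟩
  · -- monotone
    intro a b hab
    by_cases ha : a = k <;> by_cases hb : b = k
    · simp [ha, hb]
    · subst ha
      simp only [if_pos rfl, if_neg hb]
      exact hkey b (lt_of_le_of_ne hab (by simpa [eq_comm] using hb))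
    · subst hb
      simp only [if_neg ha, if_pos rfl]
      exact le_trans (hd.1 hab) (Nat.le_succ _)
    · simp only [if_neg ha, if_neg hb]
      exact hd.1 hab
  · -- bound
    intro m
    rcases inShape_staircase n (i+1) (j+1) |>.1 hdg with ⟨-, hjn⟩
    by_cases hm : m = k <;> simp [hm]
    · omega
    · exact hd.2 m
  · -- set equality
    rw [hD']
    ext ⟨a, b⟩
    simp only [Set.mem_insert_iff, Set.mem_diff, Set.mem_singleton_iff]
    rw [mem_config, mem_config]
    constructor
    · rintro (he | ⟨⟨m, hm1, hm2⟩, hne⟩)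
      · rw [Prod.ext_iff] at he
        exact ⟨k, by simp; omega, by simp at he ⊢; omega⟩
      · have hmk : m ≠ k := by
          rintro rfl
          exact hne (by rw [Prod.ext_iff]; constructor <;> simp <;> omega)
        exact ⟨m, by simp [hmk]; omega, by omega⟩
    · rintro ⟨m, hm1, hm2⟩
      by_cases hmk : m = k
      · subst hmk
        simp at hm1
        left; rw [Prod.ext_iff]; constructor <;> simp <;> omega
      · simp [hmk] at hm1
        right
        refine ⟨⟨m, hm1, hm2⟩, ?_⟩
        rw [Prod.ext_iff]
        rintro ⟨rfl, rfl⟩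
        exact hmk (by ext; omega)

lemma reach_config {n p : ℕ} (N : ℕ) (d : Fin p → ℕ) (hd : dvalid n d)
    (hs : ∑ k, d k = N) :
    Relation.ReflTransGen (ExcitedMove (staircase n)) (config (fun _ : Fin p => 0))
      (config d) := by
  induction N using Nat.strong_induction_on generalizing d with
  | _ N ih =>
  by_cases h0 : ∀ k, d k = 0
  · rw [funext h0]
  · push_neg at h0
    have hne : (Finset.univ.filter (fun k => d k ≠ 0)).Nonempty := by
      obtain ⟨k, hk⟩ := h0
      exact ⟨k, by simp [hk]⟩
    set k := (Finset.univ.filter (fun k => d k ≠ 0)).min' hne with hkdef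
    have hdk : d k ≠ 0 := by
      have := Finset.min'_mem _ hne
      simpa [hkdef] using this
    have hmin : ∀ m : Fin p, m < k → d m = 0 := by
      intro m hm
      by_contra hne2
      exact absurd (Finset.min'_le _ m (by simp [hne2])) (not_le.2 hm)
    set d' : Fin p → ℕ := fun m => if m = k then d k - 1 else d m with hd'def
    have hd' : dvalid n d' := by
      constructor
      · intro a b hab
        by_cases ha : a = k <;> by_cases hb : b = k
        · simp [ha, hb]
        · subst ha
          simp only [hd'def, if_pos rfl, if_neg hb]
          exact le_trans (Nat.sub_le _ _) (hd.1 hab)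
        · subst hb
          simp only [hd'def, if_neg ha, if_pos rfl]
          have : d a = 0 := hmin a (lt_of_le_of_ne hab ha)
          omega
        · simp only [hd'def, if_neg ha, if_neg hb]
          exact hd.1 hab
      · intro m
        have h1 := hd.2 m
        have h2 := hd.2 k
        by_cases hm : m = k
        · subst hm
          simp only [hd'def, if_pos rfl]
          omega
        · simp only [hd'def, if_neg hm]
          omega
    have hsum : (∑ m, d' m) + 1 = ∑ m, d m := by
      rw [← Finset.sum_erase_add _ _ (Finset.mem_univ k), ← Finset.sum_erase_add _ d (Finset.mem_univ k)]
      have : ∀ m ∈ Finset.univ.erase k, d' m = d m := by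
        intro m hm
        simp only [hd'def, if_neg (Finset.ne_of_mem_erase hm)]
      rw [Finset.sum_congr rfl this]
      simp only [hd'def, if_pos rfl]
      rw [add_assoc, Nat.sub_add_cancel (Nat.one_le_iff_ne_zero.2 hdk)]
    have hbound := hd.2 k
    have step : ExcitedMove (staircase n) (config d') (config d) := by
      refine ⟨d k - 1, d k - 1 + k.val, ?_, ?_, ?_, ?_, ?_, ?_, ?_⟩
      · exact (mem_config _ _ _).2 ⟨k, by simp [hd'def], rfl⟩
      · rw [inShape_staircase]; omega
      · rw [mem_config]
        rintro ⟨m, hm1, hm2⟩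
        have hmk : k < m := by
          rw [Fin.lt_def]; omega
        have hmono := hd.1 (le_of_lt hmk)
        have : m ≠ k := (Fin.lt_iff_val_lt_val.1 hmk).ne' ∘ congrArg Fin.val
        simp only [hd'def, if_neg this] at hm1
        omega
      · rw [inShape_staircase]; omega
      · rw [mem_config]
        rintro ⟨m, hm1, hm2⟩
        have hmk : m = k := by ext; omega
        subst hmk
        simp only [hd'def, if_pos rfl] at hm1
        omega
      · right
        rw [mem_config]
        rintro ⟨m, hm1, hm2⟩
        have hmk : m.val < k.val := by omega
        have hm0 : d m = 0 := hmin m hmk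
        have : m ≠ k := by intro h; rw [h] at hmk; omega
        simp only [hd'def, if_neg this] at hm1
        omega
      · ext ⟨a, b⟩
        simp only [Set.mem_insert_iff, Set.mem_diff, Set.mem_singleton_iff]
        rw [mem_config, mem_config]
        constructor
        · rintro ⟨m, hm1, hm2⟩
          by_cases hmk : m = k
          · subst hmk
            left; rw [Prod.ext_iff]; constructor <;> simp <;> omega
          · right
            refine ⟨⟨m, by simp only [hd'def, if_neg hmk]; omega, hm2⟩, ?_⟩
            rw [Prod.ext_iff]
            rintro ⟨rfl, rfl⟩
            exact hmk (by ext; omega)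
        · rintro (he | ⟨⟨m, hm1, hm2⟩, hne⟩)
          · rw [Prod.ext_iff] at he
            exact ⟨k, by omega, by omega⟩
          · by_cases hmk : m = k
            · subst hmk
              exfalso
              apply hne
              simp only [hd'def, if_pos rfl] at hm1
              rw [Prod.ext_iff]
              constructor <;> simp <;> omega
            · simp only [hd'def, if_neg hmk] at hm1
              exact ⟨m, hm1, hm2⟩
    exact Relation.ReflTransGen.tail (ih (N - 1) (by omega) d' hd' (by omega)) step

lemma eyd_eq (n p : ℕ) (hpn : p ≤ n) :
    EYD (staircase n) [p] = config '' {d : Fin p → ℕ | dvalid n d} := by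
  have hzero : dvalid n (fun _ : Fin p => 0) :=
    ⟨monotone_const, fun k => by have := k.2; show 0 + k.val < n; omega⟩
  ext D
  constructor
  · rintro ⟨hsub, hreach⟩
    rw [cells_single] at hreach
    clear hsub
    induction hreach with
    | refl => exact ⟨_, hzero, rfl⟩
    | tail h1 h2 ih =>
      obtain ⟨d, hd, rfl⟩ := ih
      obtain ⟨d', hd', rfl⟩ := move_config hd h2
      exact ⟨d', hd', rfl⟩
  · rintro ⟨d, hd, rfl⟩
    refine ⟨?_, ?_⟩
    · rw [cells_single]
      rintro ⟨a, b⟩ hab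
      rw [mem_config] at hab
      obtain ⟨k, h1, h2⟩ := hab
      have h1' : 0 = a := h1
      have hk := k.2
      show InShape (staircase n) (a, b)
      rw [inShape_staircase]
      omega
    · rw [cells_single]
      exact reach_config _ d hd rfl

lemma fin_strictMono_ge_aux {p : ℕ} (g : Fin p → ℕ) (hg : StrictMono g) :
    ∀ m : ℕ, ∀ hm : m < p, m ≤ g ⟨m, hm⟩ := by
  intro m
  induction m with
  | zero => intro _; exact Nat.zero_le _
  | succ m ih =>
    intro hm
    have h1 := ih (by omega)
    have h2 : g ⟨m, by omega⟩ < g ⟨m+1, hm⟩ := hg (by simp [Fin.lt_def])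
    omega

lemma fin_strictMono_ge {p : ℕ} (g : Fin p → ℕ) (hg : StrictMono g) (k : Fin p) :
    k.val ≤ g k := by
  have := fin_strictMono_ge_aux g hg k.val k.2
  simpa [Fin.eta] using this

lemma fin_strictMono_gap {p : ℕ} (g : Fin p → ℕ) (hg : StrictMono g) :
    ∀ t : ℕ, ∀ a b : Fin p, a.val + t = b.val → g a + t ≤ g b := by
  intro t
  induction t with
  | zero =>
    intro a b h
    have : a = b := by ext; omega
    rw [this]
    omega
  | succ t ih =>
    intro a b h
    have hb' : a.val + t < p := by have := b.2; omega
    have h1 := ih a ⟨a.val + t, hb'⟩ rfl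
    have h2 : g ⟨a.val + t, hb'⟩ < g b := hg (by rw [Fin.lt_def]; simp; omega)
    omega

def dEquiv (n p : ℕ) : {d : Fin p → ℕ // dvalid n d} ≃ {s : Finset (Fin n) // s.card = p} where
  toFun d := ⟨Finset.univ.image (fun k : Fin p => (⟨d.1 k + k.val, d.2.2 k⟩ : Fin n)), by
    have hinj : Function.Injective (fun k : Fin p => (⟨d.1 k + k.val, d.2.2 k⟩ : Fin n)) := by
      intro a b hab
      have hv : d.1 a + a.val = d.1 b + b.val := congrArg Fin.val hab
      rcases lt_trichotomy a b with h | h | h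
      · have := d.2.1 (le_of_lt h)
        have hab2 : a.val < b.val := h
        omega
      · exact h
      · have := d.2.1 (le_of_lt h)
        have hab2 : b.val < a.val := h
        omega
    rw [Finset.card_image_of_injective _ hinj, Finset.card_univ, Fintype.card_fin]⟩
  invFun s := ⟨fun k : Fin p => ((s.1.orderEmbOfFin s.2 k : Fin n) : ℕ) - k.val, by
    set g : Fin p → ℕ := fun k => ((s.1.orderEmbOfFin s.2 k : Fin n) : ℕ) with hg
    have hgm : StrictMono g := fun a b hab => (s.1.orderEmbOfFin s.2).strictMono hab
    constructor
    · intro a b hab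
      have h1 := fin_strictMono_gap g hgm (b.val - a.val) a b (by omega)
      have h2 := fin_strictMono_ge g hgm a
      show g a - a.val ≤ g b - b.val
      omega
    · intro k
      have h2 := fin_strictMono_ge g hgm k
      have h3 : g k < n := (s.1.orderEmbOfFin s.2 k).2
      show g k - k.val + k.val < n
      omega⟩
  left_inv := by
    rintro ⟨d, hd⟩
    ext k
    simp only
    set f : Fin p → Fin n := fun k : Fin p => (⟨d k + k.val, hd.2 k⟩ : Fin n) with hf
    have hfm : StrictMono f := by
      intro a b hab
      rw [Fin.lt_def]
      have := hd.1 (le_of_lt hab)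
      have hab2 : a.val < b.val := hab
      simp only [hf]
      omega
    have hmem : ∀ x, f x ∈ Finset.univ.image f := fun x => Finset.mem_image_of_mem _ (Finset.mem_univ x)
    have := Finset.orderEmbOfFin_unique (f := f)
      (s := Finset.univ.image f) (by
        rw [Finset.card_image_of_injective _ hfm.injective, Finset.card_univ, Fintype.card_fin])
      hmem hfm
    rw [← this]
    simp [hf]
  right_inv := by
    rintro ⟨s, hs⟩
    ext x
    simp only [Finset.mem_image, Finset.mem_univ, true_and]
    set g : Fin p → ℕ := fun k => ((s.orderEmbOfFin hs k : Fin n) : ℕ) with hg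
    have hgm : StrictMono g := fun a b hab => (s.orderEmbOfFin hs).strictMono hab
    constructor
    · rintro ⟨k, rfl⟩
      have h2 := fin_strictMono_ge g hgm k
      have hmem := Finset.orderEmbOfFin_mem s hs k
      convert hmem using 2
      show g k - k.val + k.val = g k
      omega
    · intro hx
      have hx2 : (x : Fin n) ∈ Set.range (s.orderEmbOfFin hs) := by
        rw [Finset.range_orderEmbOfFin]
        exact Finset.mem_coe.2 hx
      obtain ⟨k, hk⟩ := hx2
      refine ⟨k, ?_⟩
      have h2 := fin_strictMono_ge g hgm k
      have hgx : g k = (x : ℕ) := congrArg Fin.val hk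
      apply Fin.ext
      show g k - k.val + k.val = (x : ℕ)
      omega

theorem eyd_one_row_count' (n p : ℕ) (hp : 1 ≤ p) (hpn : p ≤ n) :
    Set.ncard (EYD (staircase n) [p]) = n.choose p := by
  rw [eyd_eq n p hpn, Set.ncard_image_of_injective _ config_injective,
    ← Nat.card_coe_set_eq]
  have h : Nat.card {d : Fin p → ℕ // dvalid n d} = n.choose p := by
    rw [Nat.card_congr (dEquiv n p), Nat.card_eq_fintype_card,
      Fintype.card_finset_len, Fintype.card_fin]
  exact h

/-- For a strict partition `λ` with `n` parts and `1 ≤ p ≤ n`, the number of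
excited Young diagrams of the one-row partition `(p)` inside `ρ_n` is `C(n,p)`;
hence `𝔡_{λ,(p)}^{λ} = |E_{ρ_n}((p))| · 2^{p-1} = C(n,p) · 2^{p-1}`. -/
theorem eyd_one_row_count (n p : ℕ) (hp : 1 ≤ p) (hpn : p ≤ n) :
    Set.ncard (EYD (staircase n) [p]) = n.choose p ∧
    Set.ncard (EYD (staircase n) [p]) * 2 ^ (p - 1) = n.choose p * 2 ^ (p - 1) := by
  have h := eyd_one_row_count' n p hp hpn
  exact ⟨h, by rw [h]⟩
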